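/- Let $a, b, q \in (0,1)$ with $a > q$, $b > q$, $a + b > 1$ (for convergence). Then $B(a,b)\,{}_3F_2(a, q, b; a+b, q+1; 1) = q \int\int_{E} x^{a-q-1} y^{b-q-1} (x+y-1)^{q-1}\, dx\, dy$ where $E = \{(x,y) \in [0,1]^2 : x + y \geq 1\}$. -/

import Mathlib

open Finset MeasureTheory

/-- Pochhammer (rising factorial) symbol `(x)_n`. -/
noncomputable def poch (x : ℝ) (n : ℕ) : ℝ := ∏ k ∈ Finset.range n, (x + k)

/-- Generalized hypergeometric series ₃F₂. -/
noncomputable def F32 (a₁ a₂ a₃ b₁ b₂ z : ℝ) : ℝ :=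
  ∑' n : ℕ, (poch a₁ n * poch a₂ n * poch a₃ n) /
    (poch b₁ n * poch b₂ n * n.factorial) * z ^ n

/-- Beta function. -/
noncomputable def Beta (a b : ℝ) : ℝ := Real.Gamma a * Real.Gamma b / Real.Gamma (a + b)

open Set
open scoped ENNReal

lemma poch_pos {x : ℝ} (hx : 0 < x) (n : ℕ) : 0 < poch x n :=
  Finset.prod_pos fun k _ => by positivity

lemma poch_succ (x : ℝ) (n : ℕ) : poch x (n+1) = poch x n * (x + n) :=
  Finset.prod_range_succ _ _

lemma poch_shift (x : ℝ) (n : ℕ) : poch x (n+1) = x * poch (x+1) n := by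
  unfold poch
  rw [Finset.prod_range_succ']
  rw [Finset.prod_congr rfl (fun k _ => (by push_cast; ring :
    x + ((k:ℕ)+1:ℕ) = (x + 1 + k : ℝ)))]
  push_cast
  ring

lemma poch_mul (x : ℝ) (n : ℕ) : poch x n * (x + n) = x * poch (x+1) n := by
  rw [← poch_succ, poch_shift]

lemma Gamma_poch {x : ℝ} (hx : 0 < x) (n : ℕ) :
    Real.Gamma (x + n) = Real.Gamma x * poch x n := by
  induction n with
  | zero => simp [poch]
  | succ n ih =>
    have hxn : x + (n:ℝ) ≠ 0 := by positivity
    have h : x + ((n:ℕ)+1:ℕ) = (x + n) + 1 := by push_cast; ring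
    rw [h, Real.Gamma_add_one hxn, ih, poch_succ]; ring

lemma Beta_pos {u v : ℝ} (hu : 0 < u) (hv : 0 < v) : 0 < Beta u v := by
  unfold Beta
  have h1 := Real.Gamma_pos_of_pos hu
  have h2 := Real.Gamma_pos_of_pos hv
  have h3 := Real.Gamma_pos_of_pos (by linarith : 0 < u + v)
  positivity

lemma measurable_rpow_const {c : ℝ} : Measurable fun x : ℝ => x ^ c := by
  have h : (fun x : ℝ => x ^ c) = fun x =>
      if x = 0 then (if c = 0 then 1 else 0)
      else Real.exp (Real.log x * c) * if x < 0 then Real.cos (c * Real.pi) else 1 := by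
    funext x
    rcases lt_trichotomy x 0 with h|h|h
    · rw [if_neg h.ne, if_pos h, Real.rpow_def_of_neg h]
    · subst h
      rw [if_pos rfl]
      by_cases hc : c = 0
      · rw [if_pos hc, hc, Real.rpow_zero]
      · rw [if_neg hc, Real.zero_rpow hc]
    · rw [if_neg h.ne', if_neg (not_lt.mpr h.le), mul_one, Real.rpow_def_of_pos h]
  rw [h]
  have hs : MeasurableSet {x : ℝ | x = 0} := by
    rw [Set.setOf_eq_eq_singleton]; exact measurableSet_singleton 0
  refine Measurable.ite hs measurable_const ?_
  refine (Real.measurable_exp.comp (Real.measurable_log.mul measurable_const)).mul ?_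
  exact Measurable.ite measurableSet_Iio measurable_const measurable_const

lemma beta_integral_real {u v : ℝ} (hu : 0 < u) (hv : 0 < v) :
    ∫ x in (0:ℝ)..1, x ^ (u-1) * (1-x) ^ (v-1) = Beta u v := by
  have key := Complex.Gamma_mul_Gamma_eq_betaIntegral
    (s := (u:ℂ)) (t := (v:ℂ)) (by simpa using hu) (by simpa using hv)
  have h1 : Complex.betaIntegral u v
      = ((∫ x in (0:ℝ)..1, x ^ (u-1) * (1-x) ^ (v-1) : ℝ) : ℂ) := by
    rw [← intervalIntegral.integral_ofReal, Complex.betaIntegral]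
    refine intervalIntegral.integral_congr fun x hx => ?_
    rw [Set.uIcc_of_le zero_le_one] at hx
    have hx0 : (0:ℝ) ≤ x := hx.1
    have hx1 : (0:ℝ) ≤ 1 - x := by linarith [hx.2]
    rw [show ((u:ℂ)-1) = ((u-1:ℝ):ℂ) by push_cast; ring,
      show ((v:ℂ)-1) = ((v-1:ℝ):ℂ) by push_cast; ring,
      show ((1:ℂ) - (x:ℂ)) = ((1-x:ℝ):ℂ) by push_cast; ring,
      ← Complex.ofReal_cpow hx0, ← Complex.ofReal_cpow hx1, ← Complex.ofReal_mul]
  rw [h1, show ((u:ℂ) + v) = ((u + v : ℝ) : ℂ) by push_cast; ring] at key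
  rw [Complex.Gamma_ofReal, Complex.Gamma_ofReal, Complex.Gamma_ofReal,
    ← Complex.ofReal_mul, ← Complex.ofReal_mul] at key
  have key' : Real.Gamma u * Real.Gamma v
      = Real.Gamma (u+v) * ∫ x in (0:ℝ)..1, x ^ (u-1) * (1-x) ^ (v-1) := by
    exact_mod_cast key
  have h0 : Real.Gamma (u+v) ≠ 0 := (Real.Gamma_pos_of_pos (by linarith)).ne'
  unfold Beta
  field_simp
  linarith [key']

lemma beta_integrand_integrableOn {u v : ℝ} (hu : 0 < u) (hv : 0 < v) :
    IntegrableOn (fun x : ℝ => x ^ (u-1) * (1-x) ^ (v-1)) (Set.Ioo 0 1) := by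
  have h := Complex.betaIntegral_convergent (u := u) (v := v) (by simpa using hu)
    (by simpa using hv)
  rw [intervalIntegrable_iff_integrableOn_Ioo_of_le zero_le_one] at h
  have h2 : IntegrableOn
      (fun x : ℝ => ((x:ℂ) ^ ((u:ℂ)-1) * ((1:ℂ)-x) ^ ((v:ℂ)-1)).re) (Set.Ioo 0 1) := h.re
  refine h2.congr_fun (fun x hx => ?_) measurableSet_Ioo
  have hx0 : (0:ℝ) ≤ x := hx.1.le
  have hx1 : (0:ℝ) ≤ 1 - x := by linarith [hx.2]
  dsimp only
  rw [show ((u:ℂ)-1) = ((u-1:ℝ):ℂ) by push_cast; ring,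
    show ((v:ℂ)-1) = ((v-1:ℝ):ℂ) by push_cast; ring,
    show ((1:ℂ) - (x:ℂ)) = ((1-x:ℝ):ℂ) by push_cast; ring,
    ← Complex.ofReal_cpow hx0, ← Complex.ofReal_cpow hx1, ← Complex.ofReal_mul,
    Complex.ofReal_re]

lemma lbeta {u v : ℝ} (hu : 0 < u) (hv : 0 < v) :
    ∫⁻ x in Set.Ioo (0:ℝ) 1, ENNReal.ofReal (x ^ (u-1) * (1-x) ^ (v-1))
      = ENNReal.ofReal (Beta u v) := by
  rw [← ofReal_integral_eq_lintegral_ofReal (beta_integrand_integrableOn hu hv) ?nn]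
  · congr 1
    rw [← beta_integral_real hu hv, intervalIntegral.integral_of_le zero_le_one]
    exact setIntegral_congr_set Ioo_ae_eq_Ioc
  case nn =>
    filter_upwards [ae_restrict_mem measurableSet_Ioo] with x hx
    exact mul_nonneg (Real.rpow_nonneg hx.1.le _)
      (Real.rpow_nonneg (by linarith [hx.2]) _)

lemma lint_rpow {c : ℝ} (hc : 0 < c) :
    ∫⁻ x in Set.Ioo (0:ℝ) 1, ENNReal.ofReal (x ^ (c-1)) = ENNReal.ofReal (1/c) := by
  have h1 : ∀ᵐ x ∂(volume : Measure ℝ), x ∈ Set.Ioo (0:ℝ) 1 →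
      ENNReal.ofReal (x ^ (c-1)) = ENNReal.ofReal (x ^ (c-1) * (1-x) ^ ((1:ℝ)-1)) := by
    refine ae_of_all _ fun x hx => ?_
    rw [sub_self, Real.rpow_zero, mul_one]
  rw [setLIntegral_congr_fun_ae measurableSet_Ioo h1, lbeta hc one_pos]
  congr 1
  have hΓ := (Real.Gamma_pos_of_pos hc).ne'
  rw [Beta, Real.Gamma_one, mul_one, Real.Gamma_add_one hc.ne']
  field_simp

lemma lgamma {c r : ℝ} (hc : 0 < c) (hr : 0 < r) :
    ∫⁻ s in Set.Ioi (0:ℝ), ENNReal.ofReal (s ^ (c-1) * Real.exp (-(r * s)))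
      = ENNReal.ofReal ((1/r) ^ c * Real.Gamma c) := by
  have hint : IntegrableOn (fun s : ℝ => s ^ (c-1) * Real.exp (-(r * s))) (Set.Ioi 0) := by
    have h := integrableOn_rpow_mul_exp_neg_mul_rpow (p := 1) (s := c-1) (b := r)
      (by linarith) zero_lt_one hr
    refine h.congr_fun (fun s hs => ?_) measurableSet_Ioi
    dsimp only
    rw [Real.rpow_one]; ring_nf
  rw [← ofReal_integral_eq_lintegral_ofReal hint ?nn, Real.integral_rpow_mul_exp_neg_mul_Ioi hc hr]
  case nn =>
    filter_upwards [ae_restrict_mem measurableSet_Ioi] with s hs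
    exact mul_nonneg (Real.rpow_nonneg (le_of_lt hs) _) (Real.exp_pos _).le

lemma binom {b t : ℝ} (hb : 0 < b) (ht0 : 0 ≤ t) (ht1 : t < 1) :
    ENNReal.ofReal ((1-t) ^ (-b))
      = ∑' n : ℕ, ENNReal.ofReal (poch b n / n.factorial * t ^ n) := by
  have hr : 0 < 1 - t := by linarith
  have hΓb : 0 < Real.Gamma b := Real.Gamma_pos_of_pos hb
  set T : ℕ → ℝ → ℝ := fun n s => (s ^ (b-1) * Real.exp (-s)) * ((t*s) ^ n / n.factorial)
    with hT
  have hTm : ∀ n : ℕ, Measurable fun s => ENNReal.ofReal (T n s) := by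
    intro n
    refine Measurable.ennreal_ofReal ?_
    exact (measurable_rpow_const.mul (Real.measurable_exp.comp measurable_neg)).mul
      (((measurable_const.mul measurable_id).pow_const n).div_const _)
  have key : ENNReal.ofReal (Real.Gamma b) * ENNReal.ofReal ((1-t) ^ (-b))
      = ENNReal.ofReal (Real.Gamma b)
        * ∑' n : ℕ, ENNReal.ofReal (poch b n / n.factorial * t ^ n) := by
    have e1 : Real.Gamma b * (1-t) ^ (-b) = (1/(1-t)) ^ b * Real.Gamma b := by
      rw [Real.rpow_neg hr.le, one_div, Real.inv_rpow hr.le]; ring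
    rw [← ENNReal.ofReal_mul hΓb.le, e1, ← lgamma hb hr]
    have e2 : ∀ s ∈ Set.Ioi (0:ℝ),
        ENNReal.ofReal (s ^ (b-1) * Real.exp (-((1-t) * s)))
          = ∑' n : ℕ, ENNReal.ofReal (T n s) := by
      intro s hs
      have hs0 : (0:ℝ) < s := hs
      have hexp : Real.exp (t*s) = ∑' n : ℕ, (t*s) ^ n / n.factorial := by
        rw [Real.exp_eq_exp_ℝ, NormedSpace.exp_eq_tsum_div]
      have e3 : s ^ (b-1) * Real.exp (-((1-t) * s)) = ∑' n : ℕ, T n s := by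
        have e4 : Real.exp (-((1-t)*s)) = Real.exp (-s) * Real.exp (t*s) := by
          rw [← Real.exp_add]; ring_nf
        rw [e4, hexp, ← mul_assoc, ← tsum_mul_left]
      rw [e3]
      refine ENNReal.ofReal_tsum_of_nonneg (fun n => ?_) ?_
      · have : (0:ℝ) ≤ t * s := mul_nonneg ht0 hs0.le
        have := Real.rpow_nonneg hs0.le (b-1)
        positivity
      · exact (Real.summable_pow_div_factorial (t*s)).mul_left _
    rw [setLIntegral_congr_fun_ae measurableSet_Ioi (ae_of_all _ e2),
      lintegral_tsum (fun n => (hTm n).aemeasurable), ← ENNReal.tsum_mul_left]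
    refine tsum_congr fun n => ?_
    have e5 : ∀ s ∈ Set.Ioi (0:ℝ),
        ENNReal.ofReal (T n s)
          = ENNReal.ofReal (s ^ ((b+n)-1) * Real.exp (-((1:ℝ) * s)))
            * ENNReal.ofReal (t ^ n / n.factorial) := by
      intro s hs
      have hs0 : (0:ℝ) < s := hs
      rw [← ENNReal.ofReal_mul (by positivity)]
      congr 1
      have e6 : s ^ ((b+n)-1) = s ^ (b-1) * s ^ (n:ℕ) := by
        rw [← Real.rpow_natCast s n, ← Real.rpow_add hs0]; ring_nf
      rw [e6, one_mul]
      simp only [hT]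
      rw [mul_pow]
      ring
    have hm : Measurable fun s : ℝ =>
        ENNReal.ofReal (s ^ (b + (n:ℝ) - 1) * Real.exp (-((1:ℝ) * s))) :=
      Measurable.ennreal_ofReal (measurable_rpow_const.mul
        (Real.measurable_exp.comp (measurable_const.mul measurable_id).neg))
    rw [setLIntegral_congr_fun_ae measurableSet_Ioi (ae_of_all _ e5),
      lintegral_mul_const'' _ hm.aemeasurable,
      lgamma (by positivity : (0:ℝ) < b + n) one_pos,
      ← ENNReal.ofReal_mul (by positivity), ← ENNReal.ofReal_mul hΓb.le]
    congr 1
    rw [Gamma_poch hb n]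
    simp only [one_div, inv_one, Real.one_rpow, one_mul]
    ring
  exact (ENNReal.mul_right_inj (ENNReal.ofReal_pos.mpr hΓb).ne' ENNReal.ofReal_ne_top).mp key

lemma key_w {b q x : ℝ} (hb : 0 < b) (hq : 0 < q) (hx : x ∈ Set.Ioo (0:ℝ) 1) :
    ∫⁻ w in Set.Ioo (0:ℝ) 1, ENNReal.ofReal (w ^ (q-1) * (1 - x*w) ^ (-b))
      = ∑' n : ℕ, ENNReal.ofReal (poch b n / (n.factorial * (q + n)) * x ^ n) := by
  obtain ⟨hx0, hx1⟩ := hx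
  have e1 : ∀ w ∈ Set.Ioo (0:ℝ) 1,
      ENNReal.ofReal (w ^ (q-1) * (1 - x*w) ^ (-b))
        = ∑' n : ℕ, ENNReal.ofReal (w ^ (q + n - 1))
            * ENNReal.ofReal (poch b n / n.factorial * x ^ n) := by
    intro w hw
    have hw0 := hw.1
    have hxw0 : 0 ≤ x * w := by positivity
    have hxw1 : x * w < 1 := by nlinarith [hw.2]
    rw [ENNReal.ofReal_mul (Real.rpow_nonneg hw0.le _), binom hb hxw0 hxw1,
      ← ENNReal.tsum_mul_left]
    refine tsum_congr fun n => ?_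
    rw [← ENNReal.ofReal_mul (Real.rpow_nonneg hw0.le _),
      ← ENNReal.ofReal_mul (Real.rpow_nonneg hw0.le _)]
    congr 1
    have e2 : w ^ (q + (n:ℝ) - 1) = w ^ (q-1) * w ^ (n:ℕ) := by
      rw [← Real.rpow_natCast w n, ← Real.rpow_add hw0]; ring_nf
    rw [e2, mul_pow]
    ring
  rw [setLIntegral_congr_fun_ae measurableSet_Ioo (ae_of_all _ e1),
    lintegral_tsum (fun n => ((measurable_rpow_const.ennreal_ofReal).mul_const _).aemeasurable)]
  refine tsum_congr fun n => ?_
  rw [lintegral_mul_const'' _ measurable_rpow_const.ennreal_ofReal.aemeasurable,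
    lint_rpow (show (0:ℝ) < q + n by positivity),
    ← ENNReal.ofReal_mul (by positivity)]
  congr 1
  have hqn : (q + (n:ℝ)) ≠ 0 := by positivity
  have hnf : ((n.factorial :ℝ)) ≠ 0 := by positivity
  field_simp

lemma lintegral_image_1d {s : Set ℝ} {f f' : ℝ → ℝ} (hs : MeasurableSet s)
    (hf' : ∀ x ∈ s, HasDerivWithinAt f (f' x) s x) (hf : Set.InjOn f s) (g : ℝ → ℝ≥0∞) :
    ∫⁻ x in f '' s, g x = ∫⁻ x in s, ENNReal.ofReal |f' x| * g (f x) := by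
  simpa only [ContinuousLinearMap.det_toSpanSingleton] using
    MeasureTheory.lintegral_image_eq_lintegral_abs_det_fderiv_mul volume hs
      (fun x hx => (hf' x hx).hasFDerivWithinAt) hf g

lemma subst_y {a b q x : ℝ} (hx0 : 0 < x) (hx1 : x < 1) :
    ∫⁻ y in Set.Ioo (1-x) 1,
        ENNReal.ofReal (x ^ (a-q-1) * y ^ (b-q-1) * (x + y - 1) ^ (q-1))
      = ∫⁻ w in Set.Ioo (0:ℝ) 1,
          ENNReal.ofReal (x ^ (a-1) * (1-x) ^ (b-1))
            * ENNReal.ofReal (w ^ (q-1) * (1 - x*w) ^ (-b)) := by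
  have hu : 0 < 1 - x := by linarith
  set φ : ℝ → ℝ := fun w => (1-x) / (1 - x*w) with hφ
  have hd : ∀ w ∈ Set.Ioo (0:ℝ) 1, 0 < 1 - x*w := fun w hw => by nlinarith [hw.1, hw.2]
  have himg : φ '' Set.Ioo 0 1 = Set.Ioo (1-x) 1 := by
    ext y
    constructor
    · rintro ⟨w, hw, rfl⟩
      have h1 := hd w hw
      constructor
      · show 1 - x < (1-x) / (1 - x*w)
        rw [lt_div_iff₀ h1]; nlinarith [mul_pos (mul_pos hx0 hw.1) hu]
      · show (1-x) / (1 - x*w) < 1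
        rw [div_lt_one h1]; nlinarith [mul_lt_mul_of_pos_left hw.2 hx0]
    · intro hy
      have hy0 : 0 < y := lt_trans hu hy.1
      have hnum : 0 < y - (1-x) := by linarith [hy.1]
      refine ⟨(y - (1-x)) / (x*y), ⟨by positivity, ?_⟩, ?_⟩
      · rw [div_lt_one (by positivity)]; nlinarith [hy.2]
      · show (1-x) / (1 - x * ((y - (1-x)) / (x*y))) = y
        have e : 1 - x * ((y - (1-x)) / (x*y)) = (1-x)/y := by
          field_simp
          ring
        rw [e]
        field_simp
  have hderiv : ∀ w ∈ Set.Ioo (0:ℝ) 1,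
      HasDerivWithinAt φ ((1-x) * (x / (1 - x*w)^2)) (Set.Ioo 0 1) w := by
    intro w hw
    have h1 := (hd w hw).ne'
    have h2 : HasDerivAt (fun w : ℝ => 1 - x*w) (-x) w := by
      simpa using ((hasDerivAt_id w).const_mul x).const_sub 1
    have h6 := (h2.inv h1).const_mul (1-x)
    have h4 : φ = fun w : ℝ => (1-x) * (1 - x*w)⁻¹ := by
      funext w; rw [hφ]; exact div_eq_mul_inv _ _
    rw [h4]
    refine HasDerivAt.hasDerivWithinAt ?_
    convert h6 using 1
    · rfl
    · rfl
    ring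
  have hinj : Set.InjOn φ (Set.Ioo 0 1) := by
    intro w1 h1 w2 h2 he
    have d1 := hd w1 h1
    have d2 := hd w2 h2
    have h3 : (1 - x*w1) = (1 - x*w2) := by
      have e1 : (1-x)/(1-x*w1) * (1-x*w1) = 1-x := div_mul_cancel₀ _ d1.ne'
      have e2 : (1-x)/(1-x*w2) * (1-x*w2) = 1-x := div_mul_cancel₀ _ d2.ne'
      have he' : φ w1 = φ w2 := he
      rw [hφ] at he'
      simp only at he'
      rw [he'] at e1
      have e3 : (1-x)/(1-x*w2) * (1-x*w1) = (1-x)/(1-x*w2) * (1-x*w2) := by rw [e1, e2]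
      have hne : (1-x)/(1-x*w2) ≠ 0 := by positivity
      exact mul_left_cancel₀ hne e3
    have h5 : x * w1 = x * w2 := by linarith
    exact mul_left_cancel₀ hx0.ne' h5
  rw [← himg, lintegral_image_1d measurableSet_Ioo hderiv hinj]
  refine setLIntegral_congr_fun_ae measurableSet_Ioo (ae_of_all _ fun w hw => ?_)
  obtain ⟨hw0, hw1⟩ := hw
  have hdp : 0 < 1 - x*w := by nlinarith
  set d : ℝ := 1 - x*w with hdd
  have hφw : φ w = (1-x)/d := rfl
  have habs : |(1-x) * (x / d^2)| = (1-x) * (x/d^2) := abs_of_pos (by positivity)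
  have hy : x + φ w - 1 = (1-x) * (x*w) / d := by
    rw [hφw]; field_simp; ring
  rw [habs, hφw, hy, ← ENNReal.ofReal_mul (by positivity), ← ENNReal.ofReal_mul (by positivity)]
  congr 1
  -- pure rpow algebra
  have ha1 : x ^ (a-q-1) * x ^ (q-1) * x = x ^ (a-1) := by
    rw [show a - 1 = a-q-1 + (q-1) + 1 by ring, Real.rpow_add hx0, Real.rpow_add hx0,
      Real.rpow_one]
  have hb1 : (1-x) ^ (b-q-1) * (1-x) ^ (q-1) * (1-x) = (1-x) ^ (b-1) := by
    rw [show b - 1 = b-q-1 + (q-1) + 1 by ring, Real.rpow_add hu, Real.rpow_add hu,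
      Real.rpow_one]
  have hd1 : d^2 * d^(b-q-1) * d^(q-1) = d ^ b := by
    rw [show (d:ℝ)^2 = d ^ ((2:ℕ):ℝ) from (Real.rpow_natCast d 2).symm,
      ← Real.rpow_add hdp, ← Real.rpow_add hdp]
    congr 1
    push_cast
    ring
  have h1 : ((1-x)/d) ^ (b-q-1) = (1-x)^(b-q-1) / d^(b-q-1) := Real.div_rpow hu.le hdp.le _
  have h2 : ((1-x)*(x*w)/d) ^ (q-1)
      = (1-x)^(q-1) * (x^(q-1) * w^(q-1)) / d^(q-1) := by
    rw [Real.div_rpow (by positivity) hdp.le, Real.mul_rpow hu.le (by positivity),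
      Real.mul_rpow hx0.le hw0.le]
  have h3 : d ^ (-b) = (d ^ b)⁻¹ := Real.rpow_neg hdp.le b
  rw [h1, h2, h3, ← hd1, ← ha1, ← hb1]
  have n1 : d ≠ 0 := hdp.ne'
  have n2 : d ^ (b-q-1) ≠ 0 := (Real.rpow_pos_of_pos hdp _).ne'
  have n3 : d ^ (q-1) ≠ 0 := (Real.rpow_pos_of_pos hdp _).ne'
  field_simp

lemma slice_lemma (F : ℝ × ℝ → ENNReal) (hF : Measurable F) :
    ∫⁻ p in {p : ℝ × ℝ | (0 < p.1 ∧ p.1 < 1) ∧ 1 - p.1 < p.2 ∧ p.2 < 1}, F p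
      = ∫⁻ x in Set.Ioo (0:ℝ) 1, ∫⁻ y in Set.Ioo (1-x) 1, F (x, y) := by
  set S : Set (ℝ × ℝ) := {p : ℝ × ℝ | (0 < p.1 ∧ p.1 < 1) ∧ 1 - p.1 < p.2 ∧ p.2 < 1}
    with hS
  have hSm : MeasurableSet S := by
    have e : S = ({p : ℝ × ℝ | 0 < p.1} ∩ {p | p.1 < 1})
        ∩ ({p | 1 - p.1 < p.2} ∩ {p | p.2 < 1}) := by
      ext p; simp [hS, Set.mem_setOf_eq, Set.mem_inter_iff, and_assoc]
    rw [e]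
    exact ((measurableSet_lt measurable_const measurable_fst).inter
      (measurableSet_lt measurable_fst measurable_const)).inter
      ((measurableSet_lt (measurable_const.sub measurable_fst) measurable_snd).inter
      (measurableSet_lt measurable_snd measurable_const))
  rw [← lintegral_indicator hSm, Measure.volume_eq_prod,
    lintegral_prod _ (hF.indicator hSm).aemeasurable]
  have hx_eq : ∀ x : ℝ, (∫⁻ y, (S.indicator F) (x, y))
      = (Set.Ioo (0:ℝ) 1).indicator (fun x => ∫⁻ y in Set.Ioo (1-x) 1, F (x, y)) x := by
    intro x
    by_cases hx : x ∈ Set.Ioo (0:ℝ) 1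
    · rw [Set.indicator_of_mem hx, ← lintegral_indicator measurableSet_Ioo]
      congr 1
      funext y
      by_cases hy : y ∈ Set.Ioo (1-x) 1
      · rw [Set.indicator_of_mem hy,
          Set.indicator_of_mem (show (x,y) ∈ S from ⟨⟨hx.1, hx.2⟩, hy.1, hy.2⟩)]
      · rw [Set.indicator_of_notMem hy,
          Set.indicator_of_notMem (fun hmem => hy ⟨hmem.2.1, hmem.2.2⟩)]
    · have h0 : ∀ y : ℝ, (S.indicator F) (x, y) = 0 := fun y =>
        Set.indicator_of_notMem (fun hmem => hx ⟨hmem.1.1, hmem.1.2⟩) _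
      simp only [h0, lintegral_zero, Set.indicator_of_notMem hx]
  simp_rw [hx_eq]
  rw [lintegral_indicator measurableSet_Ioo]

lemma null_fst (c : ℝ) : (volume : Measure (ℝ × ℝ)) {p : ℝ × ℝ | p.1 = c} = 0 := by
  have e : {p : ℝ × ℝ | p.1 = c} = ({c} : Set ℝ) ×ˢ (Set.univ : Set ℝ) := by
    ext p
    simp only [Set.mem_setOf_eq, Set.mem_prod, Set.mem_singleton_iff, Set.mem_univ, and_true]
  rw [e, Measure.volume_eq_prod, Measure.prod_prod]
  simp

lemma null_snd (c : ℝ) : (volume : Measure (ℝ × ℝ)) {p : ℝ × ℝ | p.2 = c} = 0 := by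
  have e : {p : ℝ × ℝ | p.2 = c} = (Set.univ : Set ℝ) ×ˢ ({c} : Set ℝ) := by
    ext p
    simp only [Set.mem_setOf_eq, Set.mem_prod, Set.mem_singleton_iff, Set.mem_univ, true_and]
  rw [e, Measure.volume_eq_prod, Measure.prod_prod]
  simp

lemma null_diag : (volume : Measure (ℝ × ℝ)) {p : ℝ × ℝ | p.1 + p.2 = 1} = 0 := by
  have hm : MeasurableSet {p : ℝ × ℝ | p.1 + p.2 = 1} :=
    measurableSet_eq_fun (measurable_fst.add measurable_snd) measurable_const
  rw [Measure.volume_eq_prod, Measure.prod_apply hm]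
  have e : ∀ x : ℝ, (Prod.mk x ⁻¹' {p : ℝ × ℝ | p.1 + p.2 = 1}) = {(1 - x : ℝ)} := by
    intro x
    ext y
    simp only [Set.mem_preimage, Set.mem_setOf_eq, Set.mem_singleton_iff]
    constructor <;> intro h <;> linarith
  simp [e]

lemma term_algebra {a b q : ℝ} (ha : 0 < a) (hb : 0 < b) (hq : 0 < q) (n : ℕ) :
    Beta a b * (poch a n * poch q n * poch b n
        / (poch (a+b) n * poch (q+1) n * (n.factorial:ℝ)) * 1 ^ n)
      = q * (Beta (a+n) b * (poch b n / ((n.factorial:ℝ) * (q + n)))) := by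
  have h1 : Real.Gamma (a + n) = Real.Gamma a * poch a n := Gamma_poch ha n
  have h2 : Real.Gamma (a + b + n) = Real.Gamma (a+b) * poch (a+b) n :=
    Gamma_poch (by linarith) n
  have hqn : (0:ℝ) < q + n := by positivity
  have hpq : poch q n = q * poch (q+1) n / (q + n) :=
    (eq_div_iff hqn.ne').mpr (poch_mul q n)
  have hΓab := Real.Gamma_pos_of_pos (show (0:ℝ) < a + b by linarith)
  have hΓa := Real.Gamma_pos_of_pos ha
  have hΓb := Real.Gamma_pos_of_pos hb
  have hpab := poch_pos (show (0:ℝ) < a+b by linarith) n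
  have hpq1 := poch_pos (show (0:ℝ) < q+1 by linarith) n
  have hnf : (0:ℝ) < (n.factorial:ℝ) := by positivity
  unfold Beta
  rw [one_pow, mul_one, show a + (n:ℝ) + b = a + b + n by ring, h2, h1, hpq]
  field_simp
theorem stmt9 (a b q : ℝ)
    (ha : a ∈ Set.Ioo (0:ℝ) 1) (hb : b ∈ Set.Ioo (0:ℝ) 1) (hq : q ∈ Set.Ioo (0:ℝ) 1)
    (haq : q < a) (hbq : q < b) (hab : 1 < a + b) :
    Beta a b * F32 a q b (a + b) (q + 1) 1
      = q * ∫ p in {p : ℝ × ℝ | 0 ≤ p.1 ∧ p.1 ≤ 1 ∧ 0 ≤ p.2 ∧ p.2 ≤ 1 ∧ 1 ≤ p.1 + p.2},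
          p.1 ^ (a - q - 1) * p.2 ^ (b - q - 1) * (p.1 + p.2 - 1) ^ (q - 1) := by
  obtain ⟨ha0, ha1⟩ := ha
  obtain ⟨hb0, hb1⟩ := hb
  obtain ⟨hq0, hq1⟩ := hq
  set f : ℝ × ℝ → ℝ :=
    fun p => p.1 ^ (a - q - 1) * p.2 ^ (b - q - 1) * (p.1 + p.2 - 1) ^ (q - 1) with hf
  set E : Set (ℝ × ℝ) := {p | 0 ≤ p.1 ∧ p.1 ≤ 1 ∧ 0 ≤ p.2 ∧ p.2 ≤ 1 ∧ 1 ≤ p.1 + p.2} with hE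
  set E' : Set (ℝ × ℝ) := {p | (0 < p.1 ∧ p.1 < 1) ∧ 1 - p.1 < p.2 ∧ p.2 < 1} with hE'
  have hfm : Measurable f := ((measurable_rpow_const.comp measurable_fst).mul
    (measurable_rpow_const.comp measurable_snd)).mul
    (measurable_rpow_const.comp ((measurable_fst.add measurable_snd).sub measurable_const))
  have hEm : MeasurableSet E := by
    have e : E = {p : ℝ × ℝ | 0 ≤ p.1} ∩ ({p | p.1 ≤ 1} ∩ ({p | 0 ≤ p.2}
        ∩ ({p | p.2 ≤ 1} ∩ {p | 1 ≤ p.1 + p.2}))) := by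
      ext p; simp [hE, Set.mem_setOf_eq, Set.mem_inter_iff]
    rw [e]
    exact (measurableSet_le measurable_const measurable_fst).inter
      ((measurableSet_le measurable_fst measurable_const).inter
      ((measurableSet_le measurable_const measurable_snd).inter
      ((measurableSet_le measurable_snd measurable_const).inter
      (measurableSet_le measurable_const (measurable_fst.add measurable_snd)))))
  -- E and E' agree up to null sets
  have hsub : E' ⊆ E := by
    rintro p ⟨⟨h1, h2⟩, h3, h4⟩
    have : 0 < 1 - p.1 := by linarith
    exact ⟨h1.le, h2.le, by linarith, h4.le, by linarith⟩
  have hdiff : E \ E' ⊆ ({p : ℝ × ℝ | p.1 = 0} ∪ {p | p.1 = 1})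
      ∪ ({p | p.2 = 1} ∪ {p | p.1 + p.2 = 1}) := by
    rintro p ⟨⟨h1, h2, h3, h4, h5⟩, hp⟩
    simp only [hE', Set.mem_setOf_eq, not_and, not_lt] at hp
    by_cases c1 : 0 < p.1
    · by_cases c2 : p.1 < 1
      · by_cases c3 : 1 - p.1 < p.2
        · have c4 := hp ⟨c1, c2⟩
          right; left
          exact le_antisymm h4 (c4 c3)
        · right; right
          have : p.2 ≤ 1 - p.1 := not_lt.mp c3
          show p.1 + p.2 = 1
          linarith
      · left; right
        exact le_antisymm h2 (not_lt.mp c2)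
    · left; left
      exact le_antisymm (not_lt.mp c1) h1
  have hae : E =ᵐ[volume] E' := by
    rw [MeasureTheory.ae_eq_set]
    constructor
    · refine measure_mono_null hdiff ?_
      exact measure_union_null (measure_union_null (null_fst 0) (null_fst 1))
        (measure_union_null (null_snd 1) null_diag)
    · rw [Set.diff_eq_empty.mpr hsub]
      simp
  -- the lintegral chain
  have key : (∫⁻ p in E, ENNReal.ofReal (f p))
      = ∑' n : ℕ, ENNReal.ofReal (Beta (a + n) b
          * (poch b n / ((n.factorial:ℝ) * (q + n)))) := by
    have step1 : (∫⁻ p in E, ENNReal.ofReal (f p))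
        = ∫⁻ p in E', ENNReal.ofReal (f p) := setLIntegral_congr hae
    have step2 : (∫⁻ p in E', ENNReal.ofReal (f p))
        = ∫⁻ x in Set.Ioo (0:ℝ) 1, ∫⁻ y in Set.Ioo (1-x) 1, ENNReal.ofReal (f (x, y)) := by
      rw [hE']
      exact slice_lemma _ hfm.ennreal_ofReal
    have step3 : (∫⁻ x in Set.Ioo (0:ℝ) 1, ∫⁻ y in Set.Ioo (1-x) 1, ENNReal.ofReal (f (x, y)))
        = ∫⁻ x in Set.Ioo (0:ℝ) 1, ENNReal.ofReal (x ^ (a-1) * (1-x) ^ (b-1))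
            * ∑' n : ℕ, ENNReal.ofReal (poch b n / ((n.factorial:ℝ) * (q + n)) * x ^ n) := by
      refine setLIntegral_congr_fun_ae measurableSet_Ioo (ae_of_all _ fun x hx => ?_)
      have hmw : Measurable fun w : ℝ =>
          ENNReal.ofReal (w ^ (q-1) * (1 - x*w) ^ (-b)) :=
        (measurable_rpow_const.mul (measurable_rpow_const.comp
          (measurable_const.sub (measurable_const.mul measurable_id)))).ennreal_ofReal
      simp only [hf]
      rw [subst_y hx.1 hx.2, lintegral_const_mul'' _ hmw.aemeasurable,
        key_w hb0 hq0 hx]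
    have step4 : (∫⁻ x in Set.Ioo (0:ℝ) 1, ENNReal.ofReal (x ^ (a-1) * (1-x) ^ (b-1))
            * ∑' n : ℕ, ENNReal.ofReal (poch b n / ((n.factorial:ℝ) * (q + n)) * x ^ n))
        = ∑' n : ℕ, ENNReal.ofReal (Beta (a + n) b
            * (poch b n / ((n.factorial:ℝ) * (q + n)))) := by
      have e : ∀ x ∈ Set.Ioo (0:ℝ) 1,
          ENNReal.ofReal (x ^ (a-1) * (1-x) ^ (b-1))
              * ∑' n : ℕ, ENNReal.ofReal (poch b n / ((n.factorial:ℝ) * (q + n)) * x ^ n)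
            = ∑' n : ℕ, ENNReal.ofReal (x ^ (a + n - 1) * (1-x) ^ (b-1))
                * ENNReal.ofReal (poch b n / ((n.factorial:ℝ) * (q + n))) := by
        intro x hx
        have hx0 := hx.1
        have hu : (0:ℝ) < 1 - x := by linarith [hx.2]
        rw [← ENNReal.tsum_mul_left]
        refine tsum_congr fun n => ?_
        rw [← ENNReal.ofReal_mul (by positivity), ← ENNReal.ofReal_mul (by positivity)]
        congr 1
        have e2 : x ^ (a + (n:ℝ) - 1) = x ^ (a-1) * x ^ (n:ℕ) := by
          rw [← Real.rpow_natCast x n, ← Real.rpow_add hx0]; ring_nf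
        rw [e2]
        ring
      have hmn : ∀ n : ℕ, Measurable fun x : ℝ =>
          ENNReal.ofReal (x ^ (a + (n:ℝ) - 1) * (1-x) ^ (b-1))
            * ENNReal.ofReal (poch b n / ((n.factorial:ℝ) * (q + (n:ℝ)))) := fun n =>
        ((measurable_rpow_const.mul (measurable_rpow_const.comp
          (measurable_const.sub measurable_id))).ennreal_ofReal).mul_const _
      rw [setLIntegral_congr_fun_ae measurableSet_Ioo (ae_of_all _ e),
        lintegral_tsum (fun n => (hmn n).aemeasurable)]
      refine tsum_congr fun n => ?_
      have hm2 : Measurable fun x : ℝ =>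
          ENNReal.ofReal (x ^ (a + (n:ℝ) - 1) * (1-x) ^ (b-1)) :=
        (measurable_rpow_const.mul (measurable_rpow_const.comp
          (measurable_const.sub measurable_id))).ennreal_ofReal
      rw [lintegral_mul_const'' _ hm2.aemeasurable,
        lbeta (show (0:ℝ) < a + n by positivity) hb0,
        ← ENNReal.ofReal_mul (Beta_pos (by positivity) hb0).le]
    rw [step1, step2, step3, step4]
  -- RHS as toReal of the lintegral
  have hnn : 0 ≤ᵐ[volume.restrict E] f := by
    have h9 : ∀ᵐ p ∂(volume.restrict E), 0 ≤ f p := by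
      rw [ae_restrict_iff' hEm]
      refine ae_of_all _ fun p hp => ?_
      obtain ⟨h1, h2, h3, h4, h5⟩ := hp
      have h6 : (0:ℝ) ≤ p.1 + p.2 - 1 := by linarith
      simp only [hf]
      exact mul_nonneg (mul_nonneg (Real.rpow_nonneg h1 _) (Real.rpow_nonneg h3 _))
        (Real.rpow_nonneg h6 _)
    exact h9
  have hRHS : ∫ p in E, f p = (∫⁻ p in E, ENNReal.ofReal (f p)).toReal := by
    rw [integral_eq_lintegral_of_nonneg_ae hnn hfm.aestronglyMeasurable.restrict]
  -- LHS as the same series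
  have hL : Beta a b * F32 a q b (a + b) (q + 1) 1
      = ∑' n : ℕ, q * (Beta (a + n) b * (poch b n / ((n.factorial:ℝ) * (q + n)))) := by
    rw [F32, ← tsum_mul_left]
    exact tsum_congr fun n => term_algebra ha0 hb0 hq0 n
  rw [hL, tsum_mul_left, hRHS, key]
  congr 1
  rw [ENNReal.tsum_toReal_eq (fun n => ENNReal.ofReal_ne_top)]
  refine tsum_congr fun n => ?_
  rw [ENNReal.toReal_ofReal]
  have h7 : (0:ℝ) < poch b n := poch_pos hb0 n
  have h8 : (0:ℝ) < (n.factorial:ℝ) := by positivity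
  exact mul_nonneg (Beta_pos (by positivity) hb0).le (by positivity)
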